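/- If X ⊆ 2^ω is B-null for every balanced perfect set B ⊆ 2^ω, then X is an s₀-set; in particular, every perfectly null set is an s₀-set (PN ⊆ bPN ⊆ s₀). -/

import Mathlib

open MeasureTheory Set Pointwise

/-- The Cantor space `2^ω`, a compact topological group under coordinatewise
addition mod 2. -/
abbrev CS := ℕ → ZMod 2

/-- The basic clopen set `[w]` determined by a finite binary sequence `w`:
all `x ∈ 2^ω` extending `w`. -/
def cyl (w : List (ZMod 2)) : Set CS := {x | ∀ i, i < w.length → x i = w.getD i 0}

/-- `w` is a branching node of `P`: both `[w⌢0] ∩ P` and `[w⌢1] ∩ P` are nonempty. -/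
def Branch (P : Set CS) (w : List (ZMod 2)) : Prop :=
  (cyl (w ++ [0]) ∩ P).Nonempty ∧ (cyl (w ++ [1]) ∩ P).Nonempty

/-- A perfect subset of Cantor space: nonempty, closed, with no isolated points. -/
def PerfSet (P : Set CS) : Prop := Perfect P ∧ P.Nonempty

/-- `ν` is a canonical measure of the perfect set `P`: a Borel probability measure with
`ν P = 1` and `ν [w⌢0] = ν [w⌢1]` for every branching node `w` of `P`. -/
def IsCanonical (P : Set CS) (ν : Measure CS) : Prop :=
  IsProbabilityMeasure ν ∧ ν P = 1 ∧
    ∀ w : List (ZMod 2), Branch P w → ν (cyl (w ++ [0])) = ν (cyl (w ++ [1]))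

/-- `A` is `P`-null: the `μ_P`-outer measure of `A ∩ P` is `0`
(quantified over all canonical measures of `P`). -/
def PNull (P A : Set CS) : Prop := ∀ ν : Measure CS, IsCanonical P ν → ν (A ∩ P) = 0

/-- `A` is `P`-measurable: `A ∩ P` differs from a Borel set by a `P`-null set,
i.e. it is null-measurable with respect to the canonical measure of `P`. -/
def PMeasurable (P A : Set CS) : Prop :=
  ∀ ν : Measure CS, IsCanonical P ν → NullMeasurableSet (A ∩ P) ν

/-- `X` is perfectly null: `P`-null for every perfect set `P`. -/
def PerfectlyNull (X : Set CS) : Prop := ∀ P, PerfSet P → PNull P X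

/-- `μ` is the fair-coin (Lebesgue product) measure on `2^ω`:
a Borel probability measure with `μ [w] = 2^{-|w|}` for every finite binary sequence. -/
def IsFairCoin (μ : Measure CS) : Prop :=
  IsProbabilityMeasure μ ∧ ∀ w : List (ZMod 2), μ (cyl w) = (2 : ENNReal)⁻¹ ^ w.length

/-- The number of branching nodes of `P` that are proper initial segments of `v`. -/
noncomputable def brCount (P : Set CS) (v : List (ZMod 2)) : ℕ :=
  Set.ncard {u : List (ZMod 2) | u <+: v ∧ u ≠ v ∧ Branch P u}

/-- A balanced perfect set: branching nodes of strictly smaller level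
are strictly shorter. -/
def BalancedPerf (P : Set CS) : Prop :=
  PerfSet P ∧ ∀ v w : List (ZMod 2), Branch P v → Branch P w →
    brCount P v < brCount P w → v.length < w.length

/-- A uniformly perfect set: on each length, either all nodes meeting `P` branch,
or none does. -/
def UniformlyPerf (P : Set CS) : Prop :=
  PerfSet P ∧ ∀ n : ℕ,
    (∀ w : List (ZMod 2), w.length = n → (cyl w ∩ P).Nonempty → Branch P w) ∨
    (∀ w : List (ZMod 2), w.length = n → ¬ Branch P w)

/-- A Silver perfect set: determined by a partial function `ℕ ⇀ 2`
whose domain has infinite complement. -/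
def SilverPerf (P : Set CS) : Prop :=
  ∃ f : ℕ → Option (ZMod 2), {n | f n = none}.Infinite ∧
    P = {x | ∀ n b, f n = some b → x n = b}

/-- A Marczewski null (`s₀`) set. -/
def S0Set (X : Set CS) : Prop :=
  ∀ P, PerfSet P → ∃ Q, PerfSet Q ∧ Q ⊆ P ∧ Q ∩ X = ∅

/-- `S` is a Sierpiński set with respect to the measure `μ`: uncountable, with
countable intersection with every `μ`-null set. -/
def Sierpinski (μ : Measure CS) (S : Set CS) : Prop :=
  ¬ S.Countable ∧ ∀ N : Set CS, μ N = 0 → (S ∩ N).Countable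

/-- The interleaving homeomorphism `h : 2^ω × 2^ω → 2^ω`,
`h(x,y) = ⟨x 0, y 0, x 1, y 1, …⟩`. -/
def interleave (p : CS × CS) : CS := fun n => if n % 2 = 0 then p.1 (n / 2) else p.2 (n / 2)

/-- `X` is universally null: outer measure zero with respect to every finite diffused
Borel measure on `2^ω`. -/
def UniversallyNull (X : Set CS) : Prop :=
  ∀ μ : Measure CS, IsFiniteMeasure μ → (∀ x : CS, μ {x} = 0) → μ X = 0

/-- `X` is strongly null: for every sequence of positive `ε n` there are sets `A n` of
diameter `< ε n` (with respect to the standard metric `d(x,y) = 2^{-min{n : x n ≠ y n}}`,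
expressed combinatorially) covering `X`. -/
def StronglyNull (X : Set CS) : Prop :=
  ∀ ε : ℕ → ℝ, (∀ n, 0 < ε n) → ∃ A : ℕ → Set CS,
    (∀ n, ∃ N : ℕ, (2 : ℝ)⁻¹ ^ N < ε n ∧ ∀ x ∈ A n, ∀ y ∈ A n, ∀ i < N, x i = y i) ∧
    X ⊆ ⋃ n, A n

/-- `X` is perfectly null in the transitive sense: for every perfect `P` there is a
`G_δ` set `G ⊇ X` with `(G + t) ∩ P` being `P`-null for every `t`. -/
def PNPrime (X : Set CS) : Prop :=
  ∀ P, PerfSet P → ∃ G : Set CS, IsGδ G ∧ X ⊆ G ∧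
    ∀ t : CS, PNull P ((fun g => g + t) '' G)


set_option linter.unusedSectionVars false

lemma zmod2_cases (a : ZMod 2) : a = 0 ∨ a = 1 := by revert a; decide

lemma mem_cyl_append {x : CS} {w : List (ZMod 2)} {c : ZMod 2} :
    x ∈ cyl (w ++ [c]) ↔ x ∈ cyl w ∧ x w.length = c := by
  constructor
  · intro h
    refine ⟨fun i hi => ?_, ?_⟩
    · have := h i (by simp; omega)
      rwa [List.getD_append _ _ _ _ hi] at this
    · have := h w.length (by simp)
      rwa [List.getD_eq_getElem _ _ (by simp), List.getElem_concat_length rfl] at this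
  · rintro ⟨h1, h2⟩ i hi
    simp only [List.length_append, List.length_singleton] at hi
    rcases Nat.lt_or_ge i w.length with h | h
    · rw [List.getD_append _ _ _ _ h]; exact h1 i h
    · have : i = w.length := by omega
      subst this
      rw [List.getD_eq_getElem _ _ (by simp), List.getElem_concat_length rfl]
      exact h2

lemma cyl_mono {u v : List (ZMod 2)} (h : u <+: v) : cyl v ⊆ cyl u := by
  intro x hx i hi
  have hlen : i < v.length := lt_of_lt_of_le hi h.length_le
  have := hx i hlen
  rw [this, List.getD_eq_getElem _ _ hlen, List.getD_eq_getElem _ _ hi]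
  exact (h.getElem hi).symm

lemma cyl_nil : cyl ([] : List (ZMod 2)) = univ := by
  ext x; simp [cyl]

/-- prefix of `z` of length `M` as a list -/
def pre (z : CS) (M : ℕ) : List (ZMod 2) := List.ofFn fun i : Fin M => z i

@[simp] lemma pre_length (z : CS) (M : ℕ) : (pre z M).length = M := by simp [pre]

lemma pre_getD (z : CS) {M i : ℕ} (h : i < M) : (pre z M).getD i 0 = z i := by
  rw [List.getD_eq_getElem _ _ (by simp [h])]
  simp [pre]

lemma mem_cyl_pre (z : CS) (M : ℕ) : z ∈ cyl (pre z M) := by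
  intro i hi
  simp only [pre_length] at hi
  rw [pre_getD z hi]

lemma prefix_pre {z : CS} {w : List (ZMod 2)} (hz : z ∈ cyl w) {M : ℕ} (hM : w.length ≤ M) :
    w <+: pre z M := by
  rw [List.prefix_iff_eq_take]
  apply List.ext_getElem (by simp; omega)
  intro n h1 h2
  have hn : n < w.length := h1
  have hnM : n < M := lt_of_lt_of_le hn hM
  rw [List.getElem_take]
  have : z n = w.getD n 0 := hz n hn
  rw [List.getD_eq_getElem _ _ hn] at this
  simp [pre, ← this]

lemma list_ext_getD {u v : List (ZMod 2)} (hl : u.length = v.length)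
    (h : ∀ i < u.length, u.getD i 0 = v.getD i 0) : u = v := by
  apply List.ext_getElem hl
  intro n h1 h2
  have := h n h1
  rwa [List.getD_eq_getElem _ _ h1, List.getD_eq_getElem _ _ h2] at this

lemma prefix_getD {u v : List (ZMod 2)} (h : u <+: v) {i : ℕ} (hi : i < u.length) :
    v.getD i 0 = u.getD i 0 := by
  rw [List.getD_eq_getElem _ _ hi, List.getD_eq_getElem _ _ (lt_of_lt_of_le hi h.length_le)]
  exact (h.getElem hi).symm

lemma measurableSet_cyl (w : List (ZMod 2)) : MeasurableSet (cyl w) := by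
  have : cyl w = ⋂ i ∈ Finset.range w.length, {x : CS | x i = w.getD i 0} := by
    ext x; simp [cyl]
  rw [this]
  exact MeasurableSet.biInter (Finset.range w.length).countable_toSet
    (fun i _ => measurableSet_eq_fun (measurable_pi_apply i) measurable_const)

lemma isOpen_cyl (w : List (ZMod 2)) : IsOpen (cyl w) := by
  have h1 : cyl w = ⋂ i ∈ Finset.range w.length, (fun x : CS => x i) ⁻¹' {w.getD i 0} := by
    ext x; simp [cyl]
  rw [h1]
  exact isOpen_biInter_finset fun i _ =>
    IsOpen.preimage (continuous_apply i) (isOpen_discrete ({w.getD i 0} : Set (ZMod 2)))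

lemma closed_of_approx {P : Set CS} (hP : IsClosed P) (x : CS)
    (h : ∀ n, ∃ z ∈ P, ∀ i < n, z i = x i) : x ∈ P := by
  by_contra hx
  have hopen : IsOpen Pᶜ := hP.isOpen_compl
  rw [isOpen_pi_iff] at hopen
  obtain ⟨I, u, hu, hsub⟩ := hopen x hx
  obtain ⟨z, hz, hzx⟩ := h ((I.sup id) + 1)
  have : z ∈ (I : Set ℕ).pi u := by
    intro i hi
    have : z i = x i := hzx i (by
      have : i ≤ I.sup id := Finset.le_sup (f := id) hi
      omega)
    rw [this]; exact (hu i hi).2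
  exact (hsub this) hz

/-! ### Splitting construction -/

lemma split_exists {P : Set CS} (hP : Perfect P) {w : List (ZMod 2)}
    (hne : (cyl w ∩ P).Nonempty) (N : ℕ) :
    ∃ v, w <+: v ∧ N ≤ v.length ∧ Branch P v := by
  obtain ⟨z, hzw, hzP⟩ := hne
  set M := max N w.length with hM
  set w' := pre z M with hw'
  have hzw' : z ∈ cyl w' := mem_cyl_pre z M
  -- find a second point in cyl w' ∩ P
  have hacc : AccPt z (Filter.principal P) := hP.acc z hzP
  rw [accPt_iff_nhds] at hacc
  obtain ⟨y, ⟨hyU, hyP⟩, hyz⟩ := hacc (cyl w') ((isOpen_cyl w').mem_nhds hzw')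
  -- first difference
  have hd : ∃ n, z n ≠ y n := by
    by_contra h
    push_neg at h
    exact hyz (funext fun n => (h n).symm)
  classical
  let d := Nat.find hd
  have hdd : z d ≠ y d := Nat.find_spec hd
  have hmin : ∀ i < d, z i = y i := fun i hi => by
    by_contra h
    exact (Nat.find_min hd hi) h
  have hdM : M ≤ d := by
    by_contra h
    push_neg at h
    have := hyU d (by simpa [hw'] using h)
    rw [hw', pre_getD z h] at this
    exact hdd this.symm
  refine ⟨pre z d, ?_, by simpa using le_trans (le_max_left N w.length) hdM, ?_⟩
  · exact prefix_pre hzw (le_trans (le_max_right N w.length) hdM)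
  · -- z witnesses one side, y the other
    have hz' : z ∈ cyl (pre z d ++ [z d]) := by
      rw [mem_cyl_append]
      exact ⟨mem_cyl_pre z d, by simp⟩
    have hy' : y ∈ cyl (pre z d ++ [y d]) := by
      rw [mem_cyl_append]
      constructor
      · intro i hi
        simp only [pre_length] at hi
        rw [pre_getD z hi]
        exact (hmin i hi).symm
      · simp
    rcases zmod2_cases (z d) with h0 | h0 <;> rcases zmod2_cases (y d) with h1 | h1
    · exact absurd (h0.trans h1.symm) hdd
    · exact ⟨⟨z, by rwa [h0] at hz', hzP⟩, ⟨y, by rwa [h1] at hy', hyP⟩⟩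
    · exact ⟨⟨y, by rwa [h1] at hy', hyP⟩, ⟨z, by rwa [h0] at hz', hzP⟩⟩
    · exact absurd (h0.trans h1.symm) hdd

open Classical in
noncomputable def extBr (P : Set CS) (w : List (ZMod 2)) (N : ℕ) : List (ZMod 2) :=
  if h : ∃ v, w <+: v ∧ N ≤ v.length ∧ Branch P v then h.choose else []

lemma extBr_spec {P : Set CS} (hP : Perfect P) {w : List (ZMod 2)}
    (hne : (cyl w ∩ P).Nonempty) (N : ℕ) :
    w <+: extBr P w N ∧ N ≤ (extBr P w N).length ∧ Branch P (extBr P w N) := by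
  have h := split_exists hP hne N
  rw [extBr, dif_pos h]
  exact h.choose_spec

/-- restriction-extension: turn `τ : Fin k → ZMod 2` into an element of `CS` -/
def extF {k : ℕ} (τ : Fin k → ZMod 2) : CS := fun i => if h : i < k then τ ⟨i, h⟩ else 0

noncomputable def V (P : Set CS) : ℕ → CS → List (ZMod 2)
  | 0 => fun _ => extBr P [] 0
  | (k+1) => fun σ => extBr P (V P k σ ++ [σ k])
      ((Finset.univ.sup fun τ : Fin k → ZMod 2 => (V P k (extF τ)).length) + 1)

section construction
variable {P : Set CS} (hP : Perfect P) (hPne : P.Nonempty)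

lemma V_congr : ∀ (k : ℕ) {σ τ : CS}, (∀ i < k, σ i = τ i) → V P k σ = V P k τ := by
  intro k
  induction k with
  | zero => intro σ τ _; rfl
  | succ k ih =>
    intro σ τ h
    simp only [V]
    rw [ih (fun i hi => h i (by omega)), h k (by omega)]

include hP hPne

lemma branch_V (k : ℕ) (σ : CS) : Branch P (V P k σ) := by
  induction k with
  | zero =>
    have hne : (cyl ([] : List (ZMod 2)) ∩ P).Nonempty := by
      rw [cyl_nil, univ_inter]; exact hPne
    exact (extBr_spec hP hne 0).2.2
  | succ k ih =>
    have hne : (cyl (V P k σ ++ [σ k]) ∩ P).Nonempty := by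
      rcases zmod2_cases (σ k) with h | h <;> rw [h]
      exacts [ih.1, ih.2]
    simp only [V]
    exact (extBr_spec hP hne _).2.2

lemma cylV_nonempty (k : ℕ) (σ : CS) : (cyl (V P k σ ++ [σ k]) ∩ P).Nonempty := by
  rcases zmod2_cases (σ k) with h | h <;> rw [h]
  exacts [(branch_V hP hPne k σ).1, (branch_V hP hPne k σ).2]

lemma V_prefix_succ (k : ℕ) (σ : CS) : V P k σ ++ [σ k] <+: V P (k+1) σ := by
  simp only [V]
  exact (extBr_spec hP (cylV_nonempty hP hPne k σ) _).1

lemma V_length_lt (k : ℕ) (σ τ : CS) : (V P k σ).length < (V P (k+1) τ).length := by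
  have hlen := (extBr_spec hP (cylV_nonempty hP hPne k τ)
    ((Finset.univ.sup fun τ' : Fin k → ZMod 2 => (V P k (extF τ')).length) + 1)).2.1
  have hsup : (V P k σ).length ≤ Finset.univ.sup fun τ' : Fin k → ZMod 2 => (V P k (extF τ')).length := by
    have heq : V P k σ = V P k (extF (fun i : Fin k => σ i)) := by
      apply V_congr
      intro i hi
      simp [extF, hi]
    rw [heq]
    exact Finset.le_sup (f := fun τ' : Fin k → ZMod 2 => (V P k (extF τ')).length)
      (Finset.mem_univ _)
  simp only [V]
  omega

lemma V_length_lt' : ∀ {j k : ℕ}, j < k → ∀ (σ τ : CS), (V P j σ).length < (V P k τ).length := by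
  intro j k
  induction k with
  | zero => omega
  | succ k ih =>
    intro h σ τ
    rcases Nat.lt_or_ge j k with h' | h'
    · exact lt_trans (ih h' σ τ) (V_length_lt hP hPne k τ τ)
    · have : j = k := by omega
      subst this
      exact V_length_lt hP hPne j σ τ

lemma V_length_ge (k : ℕ) (σ : CS) : k ≤ (V P k σ).length := by
  induction k with
  | zero => omega
  | succ k ih => exact lt_of_le_of_lt ih (V_length_lt hP hPne k σ σ)

lemma V_prefix_mono {j k : ℕ} (h : j ≤ k) (σ : CS) : V P j σ <+: V P k σ := by
  induction k with
  | zero =>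
    have : j = 0 := by omega
    subst this; exact List.prefix_refl _
  | succ k ih =>
    rcases Nat.lt_or_ge j (k+1) with h' | h'
    · exact (ih (by omega)).trans (((List.prefix_append _ _).trans (V_prefix_succ hP hPne k σ)))
    · have : j = k + 1 := by omega
      subst this; exact List.prefix_refl _

/-- The embedding of Cantor space into `P` induced by the scheme. -/
noncomputable def gmap (P : Set CS) (σ : CS) : CS := fun n => (V P (n+1) σ).getD n 0

lemma gmap_getD (k : ℕ) (σ : CS) {i : ℕ} (hi : i < (V P k σ).length) :
    gmap P σ i = (V P k σ).getD i 0 := by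
  have h1 : i < (V P (i+1) σ).length := lt_of_lt_of_le (by omega) (V_length_ge hP hPne (i+1) σ)
  rcases le_total k (i+1) with h | h
  · have hpre := V_prefix_mono hP hPne h σ
    rw [gmap, prefix_getD hpre hi]
  · have hpre := V_prefix_mono hP hPne h σ
    rw [gmap, ← prefix_getD hpre h1]

lemma gmap_mem_cylV (k : ℕ) (σ : CS) : gmap P σ ∈ cyl (V P k σ) := by
  intro i hi
  exact gmap_getD hP hPne k σ hi

lemma gmap_at_length (k : ℕ) (σ : CS) : gmap P σ ((V P k σ).length) = σ k := by
  have hpre := V_prefix_succ hP hPne k σ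
  have hlen : (V P k σ).length < (V P (k+1) σ).length := V_length_lt hP hPne k σ σ
  rw [gmap_getD hP hPne (k+1) σ hlen, prefix_getD hpre (by simp)]
  rw [List.getD_eq_getElem _ _ (by simp), List.getElem_concat_length rfl]

lemma gmap_mem_cylV' (k : ℕ) (σ : CS) : gmap P σ ∈ cyl (V P k σ ++ [σ k]) := by
  rw [mem_cyl_append]
  exact ⟨gmap_mem_cylV hP hPne k σ, gmap_at_length hP hPne k σ⟩

lemma gmap_mem_P (σ : CS) : gmap P σ ∈ P := by
  apply closed_of_approx hP.closed
  intro n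
  obtain ⟨z, hz, hzP⟩ := (branch_V hP hPne n σ).1
  refine ⟨z, hzP, fun i hi => ?_⟩
  have hlen : i < (V P n σ).length := lt_of_lt_of_le hi (V_length_ge hP hPne n σ)
  have h1 := hz i (by simp; omega)
  rw [List.getD_append _ _ _ _ hlen] at h1
  rw [h1, gmap_getD hP hPne n σ hlen]

lemma gmap_injective : Function.Injective (gmap P) := by
  intro σ τ h
  by_contra hne
  have hd : ∃ n, σ n ≠ τ n := by
    by_contra h'
    push_neg at h'
    exact hne (funext h')
  classical
  let k := Nat.find hd
  have hk : σ k ≠ τ k := Nat.find_spec hd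
  have hmin : ∀ i < k, σ i = τ i := fun i hi => by
    by_contra h'
    exact (Nat.find_min hd hi) h'
  have hVeq : V P k σ = V P k τ := V_congr k hmin
  have h1 := gmap_at_length hP hPne k σ
  have h2 := gmap_at_length hP hPne k τ
  rw [h, hVeq] at h1
  exact hk (h1.symm.trans h2)

lemma gmap_continuous : Continuous (gmap P) := by
  apply continuous_pi
  intro n
  have hfac : (fun σ => gmap P σ n) =
      (fun τ : Fin (n+1) → ZMod 2 => (V P (n+1) (extF τ)).getD n 0) ∘
      (fun σ : CS => fun i : Fin (n+1) => σ i) := by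
    funext σ
    simp only [Function.comp_apply, gmap]
    congr 1
    apply V_congr
    intro i hi
    simp [extF, hi]
  rw [hfac]
  exact Continuous.comp continuous_of_discreteTopology
    (continuous_pi fun i => continuous_apply (i : ℕ))

lemma gmap_code_eq {k : ℕ} {σ τ : CS} (h : gmap P σ ∈ cyl (V P k τ)) :
    ∀ i < k, σ i = τ i := by
  induction k with
  | zero => omega
  | succ k ih =>
    have hpre : V P k τ ++ [τ k] <+: V P (k+1) τ := V_prefix_succ hP hPne k τ
    have h' : gmap P σ ∈ cyl (V P k τ ++ [τ k]) := cyl_mono hpre h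
    have h'' : gmap P σ ∈ cyl (V P k τ) := cyl_mono (List.prefix_append _ _) h'
    have hik := ih h''
    have hVeq : V P k σ = V P k τ := V_congr k hik
    intro i hi
    rcases Nat.lt_or_ge i k with h2 | h2
    · exact hik i h2
    · have : i = k := by omega
      subst this
      rw [mem_cyl_append] at h'
      have := h'.2
      rw [← hVeq, gmap_at_length hP hPne i σ] at this
      exact this

/-- Classification: every branching node of `range (gmap P)` containing `gmap P σ`
is of the form `V P j σ`. -/
lemma branch_range_classify {u : List (ZMod 2)} (hu : Branch (Set.range (gmap P)) u)
    {σ : CS} (hσ : gmap P σ ∈ cyl u) : ∃ j, u = V P j σ := by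
  obtain ⟨x, hx0, ⟨ρx, rfl⟩⟩ := hu.1
  obtain ⟨y, hy0, ⟨ρy, rfl⟩⟩ := hu.2
  -- one of x, y differs from gmap σ at coordinate u.length
  have hx0' := mem_cyl_append.1 hx0
  have hy0' := mem_cyl_append.1 hy0
  have hxy : gmap P ρx u.length ≠ gmap P ρy u.length := by
    rw [hx0'.2, hy0'.2]; decide
  have key : ∀ ρ : CS, gmap P ρ ∈ cyl u → gmap P ρ u.length ≠ gmap P σ u.length →
      ∃ j, u = V P j σ := by
    intro ρ hρu hρσ
    have hρσ' : ρ ≠ σ := by rintro rfl; exact hρσ rfl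
    have hd : ∃ n, ρ n ≠ σ n := by
      by_contra h'
      push_neg at h'
      exact hρσ' (funext h')
    classical
    set k := Nat.find hd with hkdef
    have hk : ρ k ≠ σ k := Nat.find_spec hd
    have hmin : ∀ i < k, ρ i = σ i := fun i hi => by
      by_contra h'
      exact (Nat.find_min hd hi) h'
    have hVeq : V P k ρ = V P k σ := V_congr k hmin
    -- gmap ρ and gmap σ agree below (V P k σ).length and differ there
    have hagree : ∀ i < (V P k σ).length, gmap P ρ i = gmap P σ i := by
      intro i hi
      rw [gmap_getD hP hPne k σ hi, ← hVeq, gmap_getD hP hPne k ρ (hVeq ▸ hi)]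
    have hdiff : gmap P ρ ((V P k σ).length) ≠ gmap P σ ((V P k σ).length) := by
      rw [gmap_at_length hP hPne k σ, ← hVeq, gmap_at_length hP hPne k ρ]
      exact hk
    -- also they agree below u.length (both in cyl u) and differ at u.length
    have hagree2 : ∀ i < u.length, gmap P ρ i = gmap P σ i := by
      intro i hi
      rw [hρu i hi, hσ i hi]
    -- so u.length = (V P k σ).length
    have hlen : u.length = (V P k σ).length := by
      rcases Nat.lt_trichotomy u.length ((V P k σ).length) with h | h | h
      · exact absurd (hagree _ h) hρσ
      · exact h
      · exact absurd (hagree2 _ h) hdiff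
    refine ⟨k, ?_⟩
    apply list_ext_getD (by rw [hlen])
    intro i hi
    rw [← hσ i hi, gmap_getD hP hPne k σ (hlen ▸ hi)]
  rcases Classical.em (gmap P ρx u.length = gmap P σ u.length) with h | h
  · exact key ρy (cyl_mono (List.prefix_append _ _) hy0) (by rw [← h]; exact fun hc => hxy hc.symm)
  · exact key ρx (cyl_mono (List.prefix_append _ _) hx0) h

lemma branch_range_V (k : ℕ) (σ : CS) : Branch (Set.range (gmap P)) (V P k σ) := by
  have key : ∀ b : ZMod 2, (cyl (V P k σ ++ [b]) ∩ Set.range (gmap P)).Nonempty := by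
    intro b
    set σb : CS := fun i => if i = k then b else σ i with hσb
    have hVeq : V P k σb = V P k σ := by
      apply V_congr
      intro i hi
      simp [hσb, Nat.ne_of_lt hi]
    have hb : σb k = b := by simp [hσb]
    refine ⟨gmap P σb, ?_, ⟨σb, rfl⟩⟩
    have := gmap_mem_cylV' hP hPne k σb
    rwa [hVeq, hb] at this
  exact ⟨key 0, key 1⟩

lemma brCount_V (k : ℕ) (σ : CS) : brCount (Set.range (gmap P)) (V P k σ) = k := by
  have hset : {u : List (ZMod 2) | u <+: V P k σ ∧ u ≠ V P k σ ∧ Branch (Set.range (gmap P)) u}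
      = (fun j => V P j σ) '' ↑(Finset.range k) := by
    ext u
    constructor
    · rintro ⟨hpre, hne, hbr⟩
      have hmem : gmap P σ ∈ cyl u := cyl_mono hpre (gmap_mem_cylV hP hPne k σ)
      obtain ⟨j, rfl⟩ := branch_range_classify hP hPne hbr hmem
      have hjk : j < k := by
        rcases Nat.lt_trichotomy j k with h | h | h
        · exact h
        · exact absurd (h ▸ rfl) hne
        · have h1 := V_length_lt' hP hPne h σ σ
          have h2 := hpre.length_le
          omega
      exact ⟨j, by simpa using hjk, rfl⟩
    · rintro ⟨j, hj, rfl⟩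
      simp only [Finset.coe_range, Set.mem_Iio] at hj
      refine ⟨V_prefix_mono hP hPne (le_of_lt hj) σ, ?_, branch_range_V hP hPne j σ⟩
      intro heq
      have heq' : V P j σ = V P k σ := heq
      have := V_length_lt' hP hPne hj σ σ
      rw [heq'] at this
      omega
  rw [brCount, hset, Set.ncard_image_of_injOn, Set.ncard_coe_finset, Finset.card_range]
  intro a ha b hb hab
  simp only [Finset.coe_range, Set.mem_Iio] at ha hb
  by_contra hne
  have hab' : V P a σ = V P b σ := hab
  rcases Nat.lt_or_ge a b with h | h
  · have := V_length_lt' hP hPne h σ σ; rw [hab'] at this; omega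
  · have hba : b < a := by omega
    have := V_length_lt' hP hPne hba σ σ; rw [hab'] at this; omega

lemma perfect_range : Perfect (Set.range (gmap P)) := by
  constructor
  · exact (isCompact_range (gmap_continuous hP hPne)).isClosed
  · rintro x ⟨σ, rfl⟩
    rw [accPt_iff_nhds]
    intro U hU
    obtain ⟨O, hOU, hO, hxO⟩ := mem_nhds_iff.1 hU
    rw [isOpen_pi_iff] at hO
    obtain ⟨I, u, hu, hsub⟩ := hO _ hxO
    set n := (I.sup id) + 1 with hn
    set σ' : CS := fun i => if i = n then σ n + 1 else σ i with hσ'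
    have hσne : σ' ≠ σ := by
      intro h
      have := congrFun h n
      simp [hσ'] at this
    have hagree : ∀ i < n, σ' i = σ i := fun i hi => by
      simp [hσ', Nat.ne_of_lt hi]
    have hVeq : V P n σ' = V P n σ := V_congr n hagree
    have hgag : ∀ i < (V P n σ).length, gmap P σ' i = gmap P σ i := by
      intro i hi
      rw [gmap_getD hP hPne n σ hi, ← hVeq, gmap_getD hP hPne n σ' (hVeq ▸ hi)]
    refine ⟨gmap P σ', ⟨hOU ?_, ⟨σ', rfl⟩⟩, ?_⟩
    · apply hsub
      intro i hi
      have hin : (i : ℕ) < (V P n σ).length := by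
        have h1 : i ≤ I.sup id := Finset.le_sup (f := id) hi
        have h2 := V_length_ge hP hPne n σ
        omega
      rw [hgag i hin]
      exact (hu i hi).2
    · exact fun h => hσne (gmap_injective hP hPne h)

lemma balanced_range : BalancedPerf (Set.range (gmap P)) := by
  refine ⟨⟨perfect_range hP hPne, ⟨gmap P (fun _ => 0), ⟨_, rfl⟩⟩⟩, ?_⟩
  intro v w hv hw hlt
  obtain ⟨x, hx, ⟨ρ, rfl⟩⟩ := hv.1
  have hxv : gmap P ρ ∈ cyl v := cyl_mono (List.prefix_append _ _) hx
  obtain ⟨j, rfl⟩ := branch_range_classify hP hPne hv hxv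
  obtain ⟨y, hy, ⟨τ, rfl⟩⟩ := hw.1
  have hyw : gmap P τ ∈ cyl w := cyl_mono (List.prefix_append _ _) hy
  obtain ⟨l, rfl⟩ := branch_range_classify hP hPne hw hyw
  rw [brCount_V hP hPne, brCount_V hP hPne] at hlt
  exact V_length_lt' hP hPne hlt ρ τ

end construction

section haar
open TopologicalSpace

noncomputable def K0 : PositiveCompacts CS :=
  ⟨⟨univ, isCompact_univ⟩, by simp [interior_univ]⟩

noncomputable def mu : Measure CS := Measure.addHaarMeasure K0

instance : Measure.IsAddHaarMeasure mu := by unfold mu; infer_instance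
instance : mu.Regular := by unfold mu; infer_instance

lemma mu_univ : mu univ = 1 := by
  have := Measure.addHaarMeasure_self (K₀ := K0)
  simpa [K0, mu] using this

instance : IsProbabilityMeasure mu := ⟨mu_univ⟩

lemma mu_singleton_eq (x y : CS) : mu {x} = mu {y} := by
  have h : (fun h => (x - y) + h) ⁻¹' ({x} : Set CS) = {y} := by
    ext z
    simp only [Set.mem_preimage, Set.mem_singleton_iff]
    constructor
    · intro h
      have h2 : z = x - (x - y) := eq_sub_of_add_eq' h
      rwa [sub_sub_cancel] at h2
    · rintro rfl
      exact sub_add_cancel _ _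
  rw [← h, measure_preimage_add]

instance : NullSingletonClass mu := by
  constructor
  intro x
  by_contra hx
  set e : ℕ → CS := fun n i => if i = n then 1 else 0 with he
  have hinj : Function.Injective e := by
    intro a b hab
    by_contra hne
    have := congrFun hab a
    simp [he, hne] at this
  have hdisj : Pairwise (Function.onFun Disjoint fun n => ({e n} : Set CS)) := by
    intro a b hab
    simp only [Function.onFun, Set.disjoint_singleton]
    exact fun h => hab (hinj h)
  have hm := measure_iUnion (μ := mu) hdisj (fun n => measurableSet_singleton _)
  have hconst : ∀ n, mu {e n} = mu {x} := fun n => mu_singleton_eq _ _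
  have : (∑' n : ℕ, mu {e n}) = ⊤ := by
    rw [tsum_congr hconst]
    exact ENNReal.tsum_const_eq_top_of_ne_zero hx
  have hle : mu (⋃ n, ({e n} : Set CS)) ≤ 1 := by
    rw [← mu_univ]; exact measure_mono (subset_univ _)
  rw [hm, this] at hle
  exact absurd hle (by simp)

end haar

section canonical
variable {P : Set CS} (hP : Perfect P) (hPne : P.Nonempty)

def Dset (σ₀ : CS) (k : ℕ) (b : ZMod 2) : Set CS := {σ : CS | (∀ i < k, σ i = σ₀ i) ∧ σ k = b}

lemma measurable_Dset (σ₀ : CS) (k : ℕ) (b : ZMod 2) : MeasurableSet (Dset σ₀ k b) := by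
  have : Dset σ₀ k b = (⋂ i ∈ Finset.range k, {σ : CS | σ i = σ₀ i}) ∩ {σ : CS | σ k = b} := by
    ext σ; simp [Dset]
  rw [this]
  exact MeasurableSet.inter
    (MeasurableSet.biInter (Finset.range k).countable_toSet
      (fun i _ => measurableSet_eq_fun (measurable_pi_apply i) measurable_const))
    (measurableSet_eq_fun (measurable_pi_apply k) measurable_const)

include hP hPne

lemma gmap_preimage_cyl (σ₀ : CS) (k : ℕ) (b : ZMod 2) :
    (gmap P) ⁻¹' (cyl (V P k σ₀ ++ [b])) = Dset σ₀ k b := by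
  ext σ
  constructor
  · intro hσ
    have h1 : gmap P σ ∈ cyl (V P k σ₀) := cyl_mono (List.prefix_append _ _) hσ
    have h2 := gmap_code_eq hP hPne h1
    have hVeq : V P k σ = V P k σ₀ := V_congr k h2
    have h3 := (mem_cyl_append.1 hσ).2
    rw [← hVeq, gmap_at_length hP hPne k σ] at h3
    exact ⟨h2, h3⟩
  · rintro ⟨h1, h2⟩
    have hVeq : V P k σ = V P k σ₀ := V_congr k h1
    have := gmap_mem_cylV' hP hPne k σ
    rwa [hVeq, h2] at this

omit hP hPne in
lemma mu_Dset_eq (σ₀ : CS) (k : ℕ) : mu (Dset σ₀ k 0) = mu (Dset σ₀ k 1) := by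
  set δ : CS := fun i => if i = k then 1 else 0 with hδ
  have h : (fun σ => δ + σ) ⁻¹' (Dset σ₀ k 0) = Dset σ₀ k 1 := by
    ext σ
    simp only [Set.mem_preimage, Dset, Set.mem_setOf_eq]
    constructor
    · rintro ⟨h1, h2⟩
      constructor
      · intro i hi
        have := h1 i hi
        simpa [hδ, Pi.add_apply, Nat.ne_of_lt hi] using this
      · have : δ k + σ k = 0 := h2
        simp only [hδ, if_pos rfl] at this
        revert this; generalize σ k = a; revert a; decide
    · rintro ⟨h1, h2⟩
      constructor
      · intro i hi
        have := h1 i hi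
        simpa [hδ, Pi.add_apply, Nat.ne_of_lt hi] using this
      · show δ k + σ k = 0
        rw [h2]
        simp only [hδ, if_pos rfl]
        decide
  rw [← h, measure_preimage_add]

include hP hPne

lemma canonical_mu_map : IsCanonical (Set.range (gmap P)) (mu.map (gmap P)) := by
  have hmeas : Measurable (gmap P) := (gmap_continuous hP hPne).measurable
  refine ⟨Measure.isProbabilityMeasure_map hmeas.aemeasurable, ?_, ?_⟩
  · rw [Measure.map_apply hmeas
      (isCompact_range (gmap_continuous hP hPne)).isClosed.measurableSet]
    have : (gmap P) ⁻¹' (Set.range (gmap P)) = univ := by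
      ext σ; simp [Set.mem_range]
    rw [this, mu_univ]
  · intro w hw
    obtain ⟨x, hx, ⟨ρ, rfl⟩⟩ := hw.1
    have hxw : gmap P ρ ∈ cyl w := cyl_mono (List.prefix_append _ _) hx
    obtain ⟨k, rfl⟩ := branch_range_classify hP hPne hw hxw
    rw [Measure.map_apply hmeas (measurableSet_cyl _),
        Measure.map_apply hmeas (measurableSet_cyl _),
        gmap_preimage_cyl hP hPne, gmap_preimage_cyl hP hPne]
    exact mu_Dset_eq ρ k

end canonical

theorem main_s0 (X : Set CS) (h : ∀ B, BalancedPerf B → PNull B X) : S0Set X := by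
  rintro P ⟨hP, hPne⟩
  set B := Set.range (gmap P) with hB
  have hbal : BalancedPerf B := balanced_range hP hPne
  set ν : Measure CS := mu.map (gmap P) with hν
  have hcan : IsCanonical B ν := canonical_mu_map hP hPne
  have hnull : ν (X ∩ B) = 0 := h B hbal ν hcan
  set N := toMeasurable ν (X ∩ B) with hNdef
  have hNm : MeasurableSet N := measurableSet_toMeasurable _ _
  have hN0 : ν N = 0 := by rw [hNdef, measure_toMeasurable]; exact hnull
  have hXBN : X ∩ B ⊆ N := subset_toMeasurable _ _
  have hmeas : Measurable (gmap P) := (gmap_continuous hP hPne).measurable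
  set A := (gmap P) ⁻¹' N with hA
  have hmuA : mu A = 0 := by
    rw [hA, ← Measure.map_apply hmeas hNm]
    exact hN0
  obtain ⟨U, hAU, hUopen, hUlt⟩ := exists_isOpen_lt_of_lt (μ := mu) A 1 (by rw [hmuA]; norm_num)
  set C := Uᶜ with hC
  have hCclosed : IsClosed C := hUopen.isClosed_compl
  have hCpos : mu C ≠ 0 := by
    intro h0
    have h1 : mu univ ≤ mu U + mu C := by
      rw [← Set.union_compl_self U]
      exact measure_union_le _ _
    rw [mu_univ, h0, add_zero] at h1
    exact absurd (lt_of_le_of_lt h1 hUlt) (lt_irrefl _)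
  have hCuncount : ¬ C.Countable := fun hc => hCpos (hc.measure_zero mu)
  obtain ⟨Vc, D, hVc, hD, hCeq⟩ := exists_countable_union_perfect_of_isClosed hCclosed
  have hDne : D.Nonempty := by
    rcases Set.eq_empty_or_nonempty D with h' | h'
    · exfalso; apply hCuncount; rw [hCeq, h', Set.union_empty]; exact hVc
    · exact h'
  have hDC : D ⊆ C := by rw [hCeq]; exact Set.subset_union_right
  have hemb : Topology.IsClosedEmbedding (gmap P) :=
    (gmap_continuous hP hPne).isClosedEmbedding (gmap_injective hP hPne)
  refine ⟨gmap P '' D, ⟨⟨?_, ?_⟩, Set.image_nonempty.2 hDne⟩, ?_, ?_⟩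
  · -- closed
    exact hemb.isClosedMap D hD.closed
  · -- preperfect
    rintro x ⟨a, haD, rfl⟩
    rw [accPt_iff_nhds]
    intro U' hU'
    have hpre : (gmap P) ⁻¹' U' ∈ nhds a :=
      (gmap_continuous hP hPne).continuousAt.preimage_mem_nhds hU'
    have hacc := hD.acc a haD
    rw [accPt_iff_nhds] at hacc
    obtain ⟨b, ⟨hbU, hbD⟩, hba⟩ := hacc _ hpre
    exact ⟨gmap P b, ⟨hbU, ⟨b, hbD, rfl⟩⟩,
      fun hc => hba (gmap_injective hP hPne hc)⟩
  · -- ⊆ P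
    rintro x ⟨a, _, rfl⟩
    exact gmap_mem_P hP hPne a
  · -- disjoint from X
    ext x
    simp only [Set.mem_inter_iff, Set.mem_empty_iff_false, iff_false, not_and]
    rintro ⟨a, haD, rfl⟩ hX
    have hxN : gmap P a ∈ N := hXBN ⟨hX, ⟨a, rfl⟩⟩
    have haU : a ∈ U := hAU hxN
    exact (hDC haD) haU


/-- If `X` is `B`-null for every balanced perfect set `B`, then `X` is an
`s₀`-set; in particular every perfectly null set is an `s₀`-set. -/
theorem stmt_9 :
    (∀ X : Set CS, (∀ B, BalancedPerf B → PNull B X) → S0Set X) ∧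
    (∀ X : Set CS, PerfectlyNull X → S0Set X) := by
  exact ⟨main_s0, fun X hpn => main_s0 X (fun B hB => hpn B hB.1)⟩
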